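/- Let T > 0 and let g : [0,T] → [0,∞) be measurable with ∫₀ᵀ g(t) dt < ∞. Let H : [0,T] → [0,∞) be measurable and bounded, and suppose H(t) ≤ ∫₀ᵗ H(s) g(t−s) ds for every t ∈ [0,T]. Then H(t) = 0 for every t ∈ [0,T]. -/

import Mathlib

open MeasureTheory Set

/-- Convolution-kernel version of Gronwall's lemma, used for uniqueness: if
`H : [0,T] → [0,∞)` is measurable and bounded with `H(t) ≤ ∫₀ᵗ H(s) g(t-s) ds` for all
`t ∈ [0,T]`, where `g ≥ 0` is integrable on `[0,T]`, then `H ≡ 0` on `[0,T]`. -/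
theorem stmt_7 (T : ℝ) (hT : 0 < T) (g : ℝ → ℝ) (hg_meas : Measurable g)
    (hg_nonneg : ∀ t ∈ Icc (0 : ℝ) T, 0 ≤ g t)
    (hg_int : IntegrableOn g (Icc (0 : ℝ) T))
    (H : ℝ → ℝ) (hH_meas : Measurable H)
    (hH_nonneg : ∀ t ∈ Icc (0 : ℝ) T, 0 ≤ H t)
    (hH_bdd : BddAbove (H '' Icc (0 : ℝ) T))
    (hrec : ∀ t ∈ Icc (0 : ℝ) T, H t ≤ ∫ s in Icc (0 : ℝ) t, H s * g (t - s)) :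
    ∀ t ∈ Icc (0 : ℝ) T, H t = 0 := by
  -- a uniform bound on H
  obtain ⟨C, hC⟩ : ∃ C, ∀ t ∈ Icc (0 : ℝ) T, H t ≤ C := by
    obtain ⟨C, hC⟩ := hH_bdd
    exact ⟨C, fun t ht => hC (mem_image_of_mem H ht)⟩
  -- H 0 = 0
  have h00 : (0:ℝ) ∈ Icc (0:ℝ) T := ⟨le_rfl, hT.le⟩
  have hH0 : H 0 = 0 := by
    have h := hrec 0 h00
    have h2 : (volume.restrict (Icc (0:ℝ) 0)) = 0 := by
      rw [Measure.restrict_eq_zero, Icc_self]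
      exact measure_singleton 0
    rw [h2, integral_zero_measure] at h
    exact le_antisymm h (hH_nonneg 0 h00)
  -- primitive of g
  set F : ℝ → ℝ := fun x => ∫ u in Icc (0:ℝ) x, g u with hF_def
  have hF_cont : ContinuousOn F (Icc 0 T) := intervalIntegral.continuousOn_primitive_Icc hg_int
  have hF0 : F 0 = 0 := by
    simp only [hF_def, integral_Icc_eq_integral_Ioc, Ioc_self, Measure.restrict_empty,
      integral_zero_measure]
  have htend : Filter.Tendsto F (nhdsWithin 0 (Icc 0 T)) (nhds 0) := by
    have := hF_cont 0 h00
    rwa [ContinuousWithinAt, hF0] at this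
  have hev : ∀ᶠ x in nhdsWithin 0 (Icc 0 T), F x < 1/2 :=
    htend.eventually_lt_const (by norm_num)
  obtain ⟨ε, hε, hball⟩ := Metric.mem_nhdsWithin_iff.mp hev
  set δ : ℝ := min (ε/2) T with hδ_def
  have hδpos : 0 < δ := lt_min (by linarith) hT
  have hδT : δ ≤ T := min_le_right _ _
  have hFδ : ∀ L, 0 ≤ L → L ≤ δ → F L < 1/2 := by
    intro L hL0 hLδ
    apply hball
    constructor
    · rw [Metric.mem_ball, Real.dist_eq, abs_of_nonneg (by linarith : (0:ℝ) ≤ L - 0)]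
      have : L ≤ ε/2 := hLδ.trans (min_le_left _ _)
      linarith
    · exact ⟨hL0, hLδ.trans hδT⟩
  -- main induction
  have key : ∀ n : ℕ, ∀ t ∈ Icc (0:ℝ) T, t ≤ n * δ → H t = 0 := by
    intro n
    induction n with
    | zero =>
      intro t ht htle
      simp only [Nat.cast_zero, zero_mul] at htle
      have : t = 0 := le_antisymm htle ht.1
      rw [this]; exact hH0
    | succ n IH =>
      -- the sup of H over the relevant set
      set S : Set ℝ := Icc (0:ℝ) T ∩ Iic ((n+1 : ℕ) * δ) with hS_def
      have h0S : (0:ℝ) ∈ S := ⟨h00, mem_Iic.mpr (by positivity)⟩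
      have hSne : (H '' S).Nonempty := ⟨H 0, 0, h0S, rfl⟩
      have hSbdd : BddAbove (H '' S) :=
        hH_bdd.mono (image_mono (inter_subset_left))
      set m : ℝ := sSup (H '' S) with hm_def
      have hm0 : 0 ≤ m :=
        (hH_nonneg 0 h00).trans (le_csSup hSbdd (mem_image_of_mem H h0S))
      have hle : ∀ t ∈ S, H t ≤ m := fun t ht => le_csSup hSbdd (mem_image_of_mem H ht)
      -- the contraction estimate
      have claim : ∀ t ∈ S, H t ≤ m / 2 := by
        rintro t ⟨ht, htle⟩
        rw [mem_Iic] at htle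
        set a : ℝ := min t ((n:ℝ) * δ) with ha_def
        have ha0 : 0 ≤ a := le_min ht.1 (by positivity)
        have hat : a ≤ t := min_le_left _ _
        have htaδ : t - a ≤ δ := by
          rcases min_cases t ((n:ℝ) * δ) with ⟨h1, h2⟩ | ⟨h1, h2⟩
          · rw [ha_def, h1]; linarith [hδpos]
          · rw [ha_def, h1]
            push_cast at htle
            linarith
        have htaT : t - a ∈ Icc (0:ℝ) T := ⟨by linarith, by linarith [hδT]⟩
        -- integrability of s ↦ g (t - s) on Icc 0 t
        have hsubT : Icc (0:ℝ) t ⊆ Icc (0:ℝ) T := Icc_subset_Icc le_rfl ht.2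
        have hg_int_t : IntegrableOn g (Icc (0:ℝ) t) := hg_int.mono_set hsubT
        have hg_ii : IntervalIntegrable g volume 0 t :=
          (intervalIntegrable_iff_integrableOn_Icc_of_le ht.1).mpr hg_int_t
        have hgt_ii : IntervalIntegrable (fun s => g (t - s)) volume 0 t := by
          have := hg_ii.comp_sub_left t
          simpa using this.symm
        have hgt : IntegrableOn (fun s => g (t - s)) (Icc (0:ℝ) t) :=
          (intervalIntegrable_iff_integrableOn_Icc_of_le ht.1).mp hgt_ii
        -- integrability of the integrand
        have hφ_meas : Measurable fun s => H s * g (t - s) :=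
          hH_meas.mul (hg_meas.comp (measurable_const.sub measurable_id))
        have hφ : IntegrableOn (fun s => H s * g (t - s)) (Icc (0:ℝ) t) := by
          refine Integrable.mono' (hgt.const_mul C) hφ_meas.aestronglyMeasurable ?_
          refine (ae_restrict_iff' measurableSet_Icc).mpr (Filter.Eventually.of_forall ?_)
          intro s hs
          have hsT : s ∈ Icc (0:ℝ) T := hsubT hs
          have htsT : t - s ∈ Icc (0:ℝ) T := ⟨by linarith [hs.2], by linarith [hs.1, ht.2]⟩
          have hg0 : 0 ≤ g (t - s) := hg_nonneg _ htsT
          rw [Real.norm_eq_abs, abs_of_nonneg (mul_nonneg (hH_nonneg s hsT) hg0)]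
          exact mul_le_mul_of_nonneg_right (hC s hsT) hg0
        -- split the integral
        have hsplit : Icc (0:ℝ) t = Icc 0 a ∪ Ioc a t := (Icc_union_Ioc_eq_Icc ha0 hat).symm
        have hdisj : Disjoint (Icc (0:ℝ) a) (Ioc a t) := by
          rw [Set.disjoint_left]
          rintro s ⟨_, hs2⟩ ⟨hs3, _⟩
          exact absurd hs2 (not_le.mpr hs3)
        have hint1 : (∫ s in Icc (0:ℝ) a, H s * g (t - s)) = 0 := by
          rw [setIntegral_congr_fun measurableSet_Icc
            (g := fun _ => (0:ℝ)) ?_, integral_zero]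
          intro s hs
          have hsT : s ∈ Icc (0:ℝ) T := ⟨hs.1, le_trans (le_trans hs.2 hat) ht.2⟩
          have hsn : s ≤ (n:ℝ) * δ := le_trans hs.2 (min_le_right _ _)
          simp [IH s hsT hsn]
        have hφa : IntegrableOn (fun s => H s * g (t - s)) (Icc (0:ℝ) a) :=
          hφ.mono_set (by rw [hsplit]; exact subset_union_left)
        have hφb : IntegrableOn (fun s => H s * g (t - s)) (Ioc a t) :=
          hφ.mono_set (by rw [hsplit]; exact subset_union_right)
        have hgtb : IntegrableOn (fun s => g (t - s)) (Ioc a t) :=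
          hgt.mono_set (Ioc_subset_Icc_self.trans (Icc_subset_Icc ha0 le_rfl))
        -- the bound on the second piece
        have hmono : (∫ s in Ioc a t, H s * g (t - s)) ≤ ∫ s in Ioc a t, m * g (t - s) := by
          refine setIntegral_mono_on hφb (hgtb.const_mul m) measurableSet_Ioc ?_
          intro s hs
          have hsT : s ∈ Icc (0:ℝ) T := ⟨ha0.trans hs.1.le, hs.2.trans ht.2⟩
          have htsT : t - s ∈ Icc (0:ℝ) T := ⟨by linarith [hs.2], by linarith [hs.1.le, ht.2, ha0]⟩
          have hsS : s ∈ S := ⟨hsT, mem_Iic.mpr (le_trans hs.2 htle)⟩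
          exact mul_le_mul_of_nonneg_right (hle s hsS) (hg_nonneg _ htsT)
        -- change of variables
        have hchange : (∫ s in Ioc a t, g (t - s)) = F (t - a) := by
          rw [← intervalIntegral.integral_of_le hat, intervalIntegral.integral_comp_sub_left g t,
            sub_self, hF_def]
          simp only [integral_Icc_eq_integral_Ioc]
          rw [intervalIntegral.integral_of_le (by linarith : (0:ℝ) ≤ t - a)]
        -- put it together
        have h := hrec t ht
        rw [hsplit, setIntegral_union hdisj measurableSet_Ioc hφa hφb, hint1, zero_add] at h
        have h2 : (∫ s in Ioc a t, m * g (t - s)) = m * F (t - a) := by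
          rw [integral_const_mul, hchange]
        have hF2 : F (t - a) < 1/2 := hFδ _ (by linarith) htaδ
        calc H t ≤ ∫ s in Ioc a t, m * g (t - s) := h.trans hmono
          _ = m * F (t - a) := h2
          _ ≤ m * (1/2) := mul_le_mul_of_nonneg_left hF2.le hm0
          _ = m / 2 := by ring
      -- conclude m ≤ 0
      have hm_le : m ≤ m / 2 := by
        refine csSup_le hSne ?_
        rintro x ⟨t, ht, rfl⟩
        exact claim t ht
      have hm_neg : m ≤ 0 := by linarith
      intro t ht htle
      have htS : t ∈ S := ⟨ht, mem_Iic.mpr (by exact_mod_cast htle)⟩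
      have := claim t htS
      exact le_antisymm (by linarith) (hH_nonneg t ht)
  -- conclude
  intro t ht
  obtain ⟨n, hn⟩ := exists_nat_ge (T / δ)
  have : T ≤ n * δ := by
    rw [div_le_iff₀ hδpos] at hn
    exact hn
  exact key n t ht (ht.2.trans this)
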